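/- Let M₁, M₂ be closed subspaces of a Hilbert space H, M = M₁ ∩ M₂, and let c(M₁,M₂) = sup{ |⟨x,y⟩| : x ∈ M₁ ∩ M^⊥, y ∈ M₂ ∩ M^⊥, ‖x‖ ≤ 1, ‖y‖ ≤ 1 } be the cosine of the Friedrichs angle. Then for every x ∈ H and every n ≥ 1, ‖(P_{M₂}P_{M₁})ⁿ(x) − P_M(x)‖ ≤ c(M₁,M₂)^{2n−1}·‖x‖. -/

import Mathlib

open scoped InnerProductSpace

noncomputable def proj {𝕜 H : Type*} [RCLike 𝕜] [NormedAddCommGroup H]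
    [InnerProductSpace 𝕜 H] (S : Submodule 𝕜 H) [CompleteSpace S] : H →L[𝕜] H :=
  S.subtypeL.comp S.orthogonalProjectionOnto

/-- The cosine of the Friedrichs angle between two subspaces. -/
noncomputable def fcos {𝕜 H : Type*} [RCLike 𝕜] [NormedAddCommGroup H]
    [InnerProductSpace 𝕜 H] (M₁ M₂ : Submodule 𝕜 H) : ℝ :=
  sSup {r : ℝ | ∃ x ∈ M₁ ⊓ (M₁ ⊓ M₂)ᗮ, ∃ y ∈ M₂ ⊓ (M₁ ⊓ M₂)ᗮ,
    ‖x‖ ≤ 1 ∧ ‖y‖ ≤ 1 ∧ r = ‖(⟪x, y⟫_𝕜 : 𝕜)‖}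

section Aux

variable {𝕜 H : Type*} [RCLike 𝕜] [NormedAddCommGroup H] [InnerProductSpace 𝕜 H]

lemma proj_apply (S : Submodule 𝕜 H) [CompleteSpace S] (z : H) :
    proj S z = (S.orthogonalProjectionOnto z : H) := rfl

lemma proj_mem (S : Submodule 𝕜 H) [CompleteSpace S] (z : H) : proj S z ∈ S :=
  (S.orthogonalProjectionOnto z).2

lemma proj_eq_self (S : Submodule 𝕜 H) [CompleteSpace S] {z : H} (hz : z ∈ S) :
    proj S z = z := by
  exact Submodule.starProjection_eq_self_iff.mpr hz

lemma norm_proj_le (S : Submodule 𝕜 H) [CompleteSpace S] (z : H) :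
    ‖proj S z‖ ≤ ‖z‖ := by
  rw [proj_apply]
  calc ‖(S.orthogonalProjectionOnto z : H)‖ = ‖S.orthogonalProjectionOnto z‖ := rfl
    _ ≤ ‖S.orthogonalProjectionOnto‖ * ‖z‖ := (S.orthogonalProjectionOnto).le_opNorm z
    _ ≤ 1 * ‖z‖ := by
        have := Submodule.orthogonalProjectionOnto_norm_le S
        exact mul_le_mul_of_nonneg_right this (norm_nonneg z)
    _ = ‖z‖ := one_mul ‖z‖

lemma proj_mem_orthogonal {M S : Submodule 𝕜 H} [CompleteSpace S] (hMS : M ≤ S)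
    {z : H} (hz : z ∈ Mᗮ) : proj S z ∈ Mᗮ := by
  intro m hm
  show ⟪m, S.starProjection z⟫_𝕜 = 0
  rw [← Submodule.inner_starProjection_left_eq_right,
    Submodule.starProjection_eq_self_iff.mpr (hMS hm)]
  exact hz m hm

lemma fcos_bddAbove (M₁ M₂ : Submodule 𝕜 H) :
    BddAbove {r : ℝ | ∃ x ∈ M₁ ⊓ (M₁ ⊓ M₂)ᗮ, ∃ y ∈ M₂ ⊓ (M₁ ⊓ M₂)ᗮ,
      ‖x‖ ≤ 1 ∧ ‖y‖ ≤ 1 ∧ r = ‖(⟪x, y⟫_𝕜 : 𝕜)‖} := by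
  refine ⟨1, ?_⟩
  rintro r ⟨x, -, y, -, hx, hy, rfl⟩
  calc ‖(⟪x, y⟫_𝕜 : 𝕜)‖ ≤ ‖x‖ * ‖y‖ := norm_inner_le_norm x y
    _ ≤ 1 * 1 := mul_le_mul hx hy (norm_nonneg y) zero_le_one
    _ = 1 := one_mul 1

lemma fcos_nonneg (M₁ M₂ : Submodule 𝕜 H) : 0 ≤ fcos M₁ M₂ := by
  refine le_csSup (fcos_bddAbove M₁ M₂) ?_
  exact ⟨0, Submodule.zero_mem _, 0, Submodule.zero_mem _, by simp, by simp, by simp⟩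

lemma inner_le_fcos (M₁ M₂ : Submodule 𝕜 H) {u v : H}
    (hu : u ∈ M₁ ⊓ (M₁ ⊓ M₂)ᗮ) (hv : v ∈ M₂ ⊓ (M₁ ⊓ M₂)ᗮ) :
    ‖(⟪u, v⟫_𝕜 : 𝕜)‖ ≤ fcos M₁ M₂ * ‖u‖ * ‖v‖ := by
  rcases eq_or_ne u 0 with rfl | hu0
  · simp
  rcases eq_or_ne v 0 with rfl | hv0
  · simp
  have hun : (0 : ℝ) < ‖u‖ := norm_pos_iff.mpr hu0
  have hvn : (0 : ℝ) < ‖v‖ := norm_pos_iff.mpr hv0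
  have hmem : ‖(⟪(‖u‖⁻¹ : 𝕜) • u, (‖v‖⁻¹ : 𝕜) • v⟫_𝕜 : 𝕜)‖ ≤ fcos M₁ M₂ := by
    refine le_csSup (fcos_bddAbove M₁ M₂) ?_
    refine ⟨(‖u‖⁻¹ : 𝕜) • u, Submodule.smul_mem _ _ hu, (‖v‖⁻¹ : 𝕜) • v,
      Submodule.smul_mem _ _ hv, ?_, ?_, rfl⟩
    · rw [norm_smul]
      simp [hun.ne']
    · rw [norm_smul]
      simp [hvn.ne']
  rw [inner_smul_left, inner_smul_right, norm_mul, norm_mul] at hmem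
  have h1 : ‖(starRingEnd 𝕜) ((‖u‖ : 𝕜)⁻¹)‖ = ‖u‖⁻¹ := by
    simp
  have h2 : ‖((‖v‖ : 𝕜)⁻¹)‖ = ‖v‖⁻¹ := by simp
  rw [h1, h2] at hmem
  have := mul_le_mul_of_nonneg_right hmem (le_of_lt (mul_pos hun hvn))
  calc ‖(⟪u, v⟫_𝕜 : 𝕜)‖
      = ‖u‖⁻¹ * (‖v‖⁻¹ * ‖(⟪u, v⟫_𝕜 : 𝕜)‖) * (‖u‖ * ‖v‖) := by
        field_simp
    _ ≤ fcos M₁ M₂ * (‖u‖ * ‖v‖) := this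
    _ = fcos M₁ M₂ * ‖u‖ * ‖v‖ := by ring

/-- Contraction: projecting an element of `M₁ ⊓ Mᗮ` to `M₂` shrinks by `c`. -/
lemma contract (M₁ M₂ : Submodule 𝕜 H) [CompleteSpace M₂] {u : H}
    (hu : u ∈ M₁ ⊓ (M₁ ⊓ M₂)ᗮ) :
    ‖proj M₂ u‖ ≤ fcos M₁ M₂ * ‖u‖ := by
  set v := proj M₂ u with hv
  have hvmem : v ∈ M₂ ⊓ (M₁ ⊓ M₂)ᗮ :=
    ⟨proj_mem M₂ u, proj_mem_orthogonal inf_le_right hu.2⟩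
  have key : (⟪u, v⟫_𝕜 : 𝕜) = (‖v‖ ^ 2 : ℝ) := by
    have h0 : (⟪u - v, v⟫_𝕜 : 𝕜) = 0 :=
      Submodule.starProjection_inner_eq_zero (K := M₂) u v (proj_mem M₂ u)
    have : (⟪u, v⟫_𝕜 : 𝕜) = ⟪v, v⟫_𝕜 := by
      rw [inner_sub_left] at h0
      linear_combination h0
    rw [this, inner_self_eq_norm_sq_to_K]; norm_cast
  have hnormsq : ‖v‖ ^ 2 ≤ fcos M₁ M₂ * ‖u‖ * ‖v‖ := by
    have h1 : ‖(⟪u, v⟫_𝕜 : 𝕜)‖ = ‖v‖ ^ 2 := by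
      rw [key]; simp [sq_nonneg]
    rw [← h1]
    exact inner_le_fcos M₁ M₂ hu hvmem
  rcases eq_or_lt_of_le (norm_nonneg v) with h0 | h0
  · rw [← h0]
    exact mul_nonneg (fcos_nonneg M₁ M₂) (norm_nonneg u)
  · have h2 : ‖v‖ * ‖v‖ ≤ fcos M₁ M₂ * ‖u‖ * ‖v‖ := by
      rw [← sq]; exact hnormsq
    exact le_of_mul_le_mul_right h2 h0

/-- Contraction, the other direction. -/
lemma contract' (M₁ M₂ : Submodule 𝕜 H) [CompleteSpace M₁] {v : H}
    (hv : v ∈ M₂ ⊓ (M₁ ⊓ M₂)ᗮ) :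
    ‖proj M₁ v‖ ≤ fcos M₁ M₂ * ‖v‖ := by
  set u := proj M₁ v with hu
  have humem : u ∈ M₁ ⊓ (M₁ ⊓ M₂)ᗮ :=
    ⟨proj_mem M₁ v, proj_mem_orthogonal inf_le_left hv.2⟩
  have key : (⟪u, v⟫_𝕜 : 𝕜) = (‖u‖ ^ 2 : ℝ) := by
    have h0 : (⟪v - u, u⟫_𝕜 : 𝕜) = 0 :=
      Submodule.starProjection_inner_eq_zero (K := M₁) v u (proj_mem M₁ v)
    have h1 : (⟪u, v - u⟫_𝕜 : 𝕜) = 0 := by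
      rw [← inner_conj_symm, h0, map_zero]
    have : (⟪u, v⟫_𝕜 : 𝕜) = ⟪u, u⟫_𝕜 := by
      rw [inner_sub_right] at h1
      linear_combination h1
    rw [this, inner_self_eq_norm_sq_to_K]; norm_cast
  have hnormsq : ‖u‖ ^ 2 ≤ fcos M₁ M₂ * ‖v‖ * ‖u‖ := by
    have h1 : ‖(⟪u, v⟫_𝕜 : 𝕜)‖ = ‖u‖ ^ 2 := by
      rw [key]; simp [sq_nonneg]
    calc ‖u‖ ^ 2 = ‖(⟪u, v⟫_𝕜 : 𝕜)‖ := h1.symm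
      _ ≤ fcos M₁ M₂ * ‖u‖ * ‖v‖ := inner_le_fcos M₁ M₂ humem hv
      _ = fcos M₁ M₂ * ‖v‖ * ‖u‖ := by ring
  rcases eq_or_lt_of_le (norm_nonneg u) with h0 | h0
  · rw [← h0]
    exact mul_nonneg (fcos_nonneg M₁ M₂) (norm_nonneg v)
  · have h2 : ‖u‖ * ‖u‖ ≤ fcos M₁ M₂ * ‖v‖ * ‖u‖ := by
      rw [← sq]; exact hnormsq
    exact le_of_mul_le_mul_right h2 h0

end Aux

/-- Aronszajn: `‖(P_{M₂}P_{M₁})ⁿ x − P_M x‖ ≤ c(M₁,M₂)^(2n−1) ‖x‖`. -/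
theorem aronszajn_rate {𝕜 H : Type*} [RCLike 𝕜] [NormedAddCommGroup H]
    [InnerProductSpace 𝕜 H] [CompleteSpace H] (M₁ M₂ : Submodule 𝕜 H)
    [CompleteSpace M₁] [CompleteSpace M₂] [CompleteSpace (M₁ ⊓ M₂ : Submodule 𝕜 H)]
    (x : H) (n : ℕ) (hn : 1 ≤ n) :
    ‖(((proj M₂).comp (proj M₁)) ^ n) x - proj (M₁ ⊓ M₂) x‖
      ≤ fcos M₁ M₂ ^ (2 * n - 1) * ‖x‖ := by
  set M := M₁ ⊓ M₂ with hM
  set c := fcos M₁ M₂ with hc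
  set P := (proj M₂).comp (proj M₁) with hP
  set y := x - proj M x with hy
  have hyorth : y ∈ Mᗮ := Submodule.sub_starProjection_mem_orthogonal (K := M) x
  -- P fixes elements of M
  have hfix : ∀ z ∈ M, P z = z := by
    intro z hz
    simp only [hP, ContinuousLinearMap.comp_apply]
    rw [proj_eq_self M₁ hz.1, proj_eq_self M₂ hz.2]
  have hPn_fix : ∀ m : ℕ, (P ^ m) (proj M x) = proj M x := by
    intro m
    induction m with
    | zero => simp
    | succ k ih => rw [pow_succ, ContinuousLinearMap.mul_apply,
        hfix _ (proj_mem M x), ih]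
  -- reduce to y
  have hred : (P ^ n) x - proj M x = (P ^ n) y := by
    rw [hy, map_sub, hPn_fix n]
  -- ‖y‖ ≤ ‖x‖
  have hynorm : ‖y‖ ≤ ‖x‖ := by
    have h0 : (⟪proj M x, y⟫_𝕜 : 𝕜) = 0 :=
      Submodule.inner_right_of_mem_orthogonal (proj_mem M x) hyorth
    have hdecomp : x = proj M x + y := by rw [hy]; abel
    have hsq : ‖x‖ * ‖x‖ = ‖proj M x‖ * ‖proj M x‖ + ‖y‖ * ‖y‖ := by
      conv_lhs => rw [hdecomp]
      exact norm_add_sq_eq_norm_sq_add_norm_sq_of_inner_eq_zero _ _ h0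
    nlinarith [norm_nonneg (proj M x), norm_nonneg y, norm_nonneg x]
  set u := proj M₁ y with hu
  have humem : u ∈ M₁ ⊓ Mᗮ := ⟨proj_mem M₁ y, proj_mem_orthogonal inf_le_left hyorth⟩
  have hunorm : ‖u‖ ≤ ‖x‖ := le_trans (norm_proj_le M₁ y) hynorm
  -- (P^n) y = (P^n) u for n ≥ 1, since P y = P u
  have hPy : P y = P u := by
    simp only [hP, ContinuousLinearMap.comp_apply, hu]
    rw [proj_eq_self M₁ (proj_mem M₁ y)]
  -- main induction: for m ≥ 1, (P^m) u ∈ M₂ ⊓ Mᗮ and ‖(P^m) u‖ ≤ c^(2m-1) ‖u‖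
  have main : ∀ m : ℕ, 1 ≤ m → (P ^ m) u ∈ M₂ ⊓ Mᗮ ∧
      ‖(P ^ m) u‖ ≤ c ^ (2 * m - 1) * ‖u‖ := by
    intro m hm
    induction m with
    | zero => omega
    | succ k ih =>
      rcases Nat.eq_or_lt_of_le hm with h1 | h1
      · -- k + 1 = 1, so k = 0
        have hk : k = 0 := by omega
        subst hk
        simp only [zero_add, pow_one]
        have hPu : P u = proj M₂ u := by
          simp only [hP, ContinuousLinearMap.comp_apply]
          rw [proj_eq_self M₁ humem.1]
        constructor
        · rw [hPu]
          exact ⟨proj_mem M₂ u, proj_mem_orthogonal inf_le_right humem.2⟩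
        · rw [hPu]
          have h21 : 2 * (0 + 1) - 1 = 1 := by norm_num
          rw [h21, pow_one]
          exact contract M₁ M₂ humem
      · have hk1 : 1 ≤ k := by omega
        obtain ⟨hmem, hnorm⟩ := ih hk1
        set v := (P ^ k) u with hv
        have hstep : (P ^ (k + 1)) u = proj M₂ (proj M₁ v) := by
          rw [pow_succ', ContinuousLinearMap.mul_apply]
          rfl
        have h1mem : proj M₁ v ∈ M₁ ⊓ Mᗮ :=
          ⟨proj_mem M₁ v, proj_mem_orthogonal inf_le_left hmem.2⟩
        have h1norm : ‖proj M₁ v‖ ≤ c * ‖v‖ := contract' M₁ M₂ hmem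
        have h2norm : ‖proj M₂ (proj M₁ v)‖ ≤ c * ‖proj M₁ v‖ := contract M₁ M₂ h1mem
        constructor
        · rw [hstep]
          exact ⟨proj_mem M₂ _, proj_mem_orthogonal inf_le_right h1mem.2⟩
        · rw [hstep]
          have hcn : (0 : ℝ) ≤ c := fcos_nonneg M₁ M₂
          calc ‖proj M₂ (proj M₁ v)‖ ≤ c * ‖proj M₁ v‖ := h2norm
            _ ≤ c * (c * ‖v‖) := mul_le_mul_of_nonneg_left h1norm hcn
            _ ≤ c * (c * (c ^ (2 * k - 1) * ‖u‖)) := by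
                have := mul_le_mul_of_nonneg_left hnorm hcn
                exact mul_le_mul_of_nonneg_left this hcn
            _ = c ^ (2 * (k + 1) - 1) * ‖u‖ := by
                have : 2 * (k + 1) - 1 = (2 * k - 1) + 2 := by omega
                rw [this, pow_add]; ring
  obtain ⟨-, hbound⟩ := main n hn
  have hPny : (P ^ n) y = (P ^ n) u := by
    obtain ⟨k, rfl⟩ := Nat.exists_eq_add_of_le hn
    rw [add_comm, pow_add, pow_one, ContinuousLinearMap.mul_apply,
      ContinuousLinearMap.mul_apply, hPy]
  rw [hred, hPny]
  exact le_trans hbound (mul_le_mul_of_nonneg_left hunorm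
    (pow_nonneg (fcos_nonneg M₁ M₂) _))
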